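/- Let K ≥ 2 be an integer and consider the annihilation–creation process A on ℤ with A_0 = {0}, where in each period K sites are added one at a time (each uniformly from the boundary of the current set) and then K−1 occupied sites are deleted one at a time (each uniformly from the current set). Let L_n be the number of unoccupied sites strictly between min A_n and max A_n. Then with probability 1, L_n ≥ K−2 eventually (for all sufficiently large n). -/

import Mathlib

open MeasureTheory Filter
open scoped ENNReal

/-- Boundary of a finite subset of `ℤ`: unoccupied sites adjacent to the set. -/
def bdryZ (a : Finset ℤ) : Finset ℤ := (a.image (· + 1) ∪ a.image (· - 1)) \ a

/-- One-step transition probability of the annihilation–creation model with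
parameter `K`, at step `t` (each period consists of `2K-1` steps: first `K`
additions, uniform on the boundary, then `K-1` deletions, uniform on the set). -/
noncomputable def stepProb (K t : ℕ) (a b : Finset ℤ) : ℝ≥0∞ :=
  if t % (2 * K - 1) < K then
    (if ∃ y ∈ bdryZ a, b = insert y a then ((bdryZ a).card : ℝ≥0∞)⁻¹ else 0)
  else
    (if ∃ y ∈ a, b = a.erase y then ((a.card : ℝ≥0∞))⁻¹ else 0)

/-- `L a`: the number of unoccupied sites strictly between the endpoints of `a`. -/
noncomputable def gapL (a : Finset ℤ) : ℕ :=
  ((Finset.Icc (a.min.untopD 0) (a.max.unbotD 0)).filter (fun x => x ∉ a)).card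

open scoped NNReal

namespace AC

noncomputable def mx (a : Finset ℤ) : ℤ := a.max.unbotD 0
noncomputable def mn (a : Finset ℤ) : ℤ := a.min.untopD 0

lemma mx_mem {a : Finset ℤ} (h : a.Nonempty) : mx a ∈ a := by
  obtain ⟨m, hm⟩ := Finset.max_of_nonempty h
  have : mx a = m := by simp [mx, hm]
  rw [this]; exact Finset.mem_of_max hm

lemma le_mx {a : Finset ℤ} {x : ℤ} (h : x ∈ a) : x ≤ mx a := by
  obtain ⟨m, hm⟩ := Finset.max_of_nonempty ⟨x, h⟩
  have : mx a = m := by simp [mx, hm]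
  rw [this]; exact Finset.le_max_of_eq h hm

lemma mn_mem {a : Finset ℤ} (h : a.Nonempty) : mn a ∈ a := by
  obtain ⟨m, hm⟩ := Finset.min_of_nonempty h
  have : mn a = m := by simp [mn, hm]
  rw [this]; exact Finset.mem_of_min hm

lemma mn_le {a : Finset ℤ} {x : ℤ} (h : x ∈ a) : mn a ≤ x := by
  obtain ⟨m, hm⟩ := Finset.min_of_nonempty ⟨x, h⟩
  have : mn a = m := by simp [mn, hm]
  rw [this]; exact Finset.min_le_of_eq h hm

lemma mx_eq_of {a b : Finset ℤ} (hsub : b ⊆ a) (hm : mx a ∈ b) : mx b = mx a :=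
  le_antisymm (le_mx (hsub (mx_mem ⟨_, hm⟩))) (le_mx hm)

lemma mn_eq_of {a b : Finset ℤ} (hsub : b ⊆ a) (hm : mn a ∈ b) : mn b = mn a :=
  le_antisymm (mn_le hm) (mn_le (hsub (mn_mem ⟨_, hm⟩)))

lemma mn_lt_mx {a : Finset ℤ} (h2 : 2 ≤ a.card) : mn a < mx a := by
  obtain ⟨x, hx, y, hy, hxy⟩ := Finset.one_lt_card.mp h2
  have h1 := mn_le hx; have h2 := mn_le hy
  have h3 := le_mx hx; have h4 := le_mx hy
  omega

lemma gapL_card {a : Finset ℤ} (h : a.Nonempty) :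
    (gapL a : ℤ) + a.card = mx a - mn a + 1 := by
  have hsub : a ⊆ Finset.Icc (mn a) (mx a) := fun x hx =>
    Finset.mem_Icc.2 ⟨mn_le hx, le_mx hx⟩
  have hfil : (Finset.Icc (mn a) (mx a)).filter (fun x => x ∈ a) = a := by
    ext x
    simp only [Finset.mem_filter]
    exact ⟨fun h => h.2, fun hx => ⟨hsub hx, hx⟩⟩
  have hcard := Finset.card_filter_add_card_filter_not
    (s := Finset.Icc (mn a) (mx a)) (p := fun x => x ∈ a)
  rw [hfil] at hcard
  have hIcc : (Finset.Icc (mn a) (mx a)).card = (mx a - mn a + 1).toNat := by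
    rw [Int.card_Icc]; ring_nf
  have hle : mn a ≤ mx a := mn_le (mx_mem h)
  have : gapL a = (Finset.Icc (mn a) (mx a)).card - a.card := by
    unfold gapL
    have : a.card + ((Finset.Icc (mn a) (mx a)).filter (fun x => x ∉ a)).card
        = (Finset.Icc (mn a) (mx a)).card := hcard
    simp only [mx, mn] at *
    omega
  rw [this, hIcc]
  have hsz : a.card ≤ (Finset.Icc (mn a) (mx a)).card := Finset.card_le_card hsub
  rw [hIcc] at hsz
  omega

/-- gap just below the max -/
noncomputable def rr (a : Finset ℤ) : ℕ := (mx a - mx (a.erase (mx a)) - 1).toNat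
/-- gap just above the min -/
noncomputable def ss (a : Finset ℤ) : ℕ := (mn (a.erase (mn a)) - mn a - 1).toNat

noncomputable def spec (a : Finset ℤ) : Finset ℤ :=
  {mx a, mn a, mx (a.erase (mx a)), mn (a.erase (mn a))}

lemma card_spec_le (a : Finset ℤ) : (spec a).card ≤ 4 := by
  unfold spec
  apply le_trans (Finset.card_insert_le _ _)
  have := Finset.card_insert_le (mn a) ({mx (a.erase (mx a)), mn (a.erase (mn a))} : Finset ℤ)
  have := Finset.card_insert_le (mx (a.erase (mx a))) ({mn (a.erase (mn a))} : Finset ℤ)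
  simp only [Finset.card_singleton] at *
  omega

lemma L_int {a : Finset ℤ} {y : ℤ} (h : y ∈ a) (hmx : y ≠ mx a) (hmn : y ≠ mn a) :
    gapL (a.erase y) = gapL a + 1 := by
  have hne : a.Nonempty := ⟨y, h⟩
  have hmem : mx a ∈ a.erase y := Finset.mem_erase.2 ⟨fun hc => hmx hc.symm, mx_mem hne⟩
  have hmem' : mn a ∈ a.erase y := Finset.mem_erase.2 ⟨fun hc => hmn hc.symm, mn_mem hne⟩
  have h1 := gapL_card (⟨_, hmem⟩ : (a.erase y).Nonempty)
  have h2 := gapL_card hne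
  rw [mx_eq_of (Finset.erase_subset _ _) hmem, mn_eq_of (Finset.erase_subset _ _) hmem'] at h1
  have hc : (a.erase y).card = a.card - 1 := Finset.card_erase_of_mem h
  have hc1 : 1 ≤ a.card := Finset.card_pos.2 hne
  rw [hc] at h1
  push_cast at h1 h2 ⊢
  omega

lemma L_mx {a : Finset ℤ} (h2 : 2 ≤ a.card) :
    gapL (a.erase (mx a)) + rr a = gapL a := by
  have hne : a.Nonempty := Finset.card_pos.1 (by omega)
  set b := a.erase (mx a) with hb
  have hbc : b.card = a.card - 1 := Finset.card_erase_of_mem (mx_mem hne)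
  have hbne : b.Nonempty := Finset.card_pos.1 (by omega)
  have hmnb : mn a ∈ b := Finset.mem_erase.2 ⟨(mn_lt_mx h2).ne, mn_mem hne⟩
  have hmnn : mn b = mn a := mn_eq_of (Finset.erase_subset _ _) hmnb
  have hlt : mx b < mx a := by
    have h1 : mx b ∈ b := mx_mem hbne
    have h1' := Finset.mem_erase.1 h1
    exact lt_of_le_of_ne (le_mx h1'.2) h1'.1
  have h1 := gapL_card hbne
  have h2' := gapL_card hne
  rw [hmnn, hbc] at h1
  have hmnle : mn a ≤ mx b := by rw [← hmnn]; exact mn_le (mx_mem hbne)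
  have hrr : (rr a : ℤ) = mx a - mx b - 1 := by
    unfold rr; rw [← hb]; rw [Int.toNat_of_nonneg (by omega)]
  push_cast at h1 h2' ⊢
  omega

lemma L_mn {a : Finset ℤ} (h2 : 2 ≤ a.card) :
    gapL (a.erase (mn a)) + ss a = gapL a := by
  have hne : a.Nonempty := Finset.card_pos.1 (by omega)
  set b := a.erase (mn a) with hb
  have hbc : b.card = a.card - 1 := Finset.card_erase_of_mem (mn_mem hne)
  have hbne : b.Nonempty := Finset.card_pos.1 (by omega)
  have hmxb : mx a ∈ b := Finset.mem_erase.2 ⟨(mn_lt_mx h2).ne', mx_mem hne⟩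
  have hmxx : mx b = mx a := mx_eq_of (Finset.erase_subset _ _) hmxb
  have hlt : mn a < mn b := by
    have h1 : mn b ∈ b := mn_mem hbne
    have h1' := Finset.mem_erase.1 h1
    exact lt_of_le_of_ne (mn_le h1'.2) (Ne.symm h1'.1)
  have h1 := gapL_card hbne
  have h2' := gapL_card hne
  rw [hmxx, hbc] at h1
  have hmle : mn b ≤ mx a := by rw [← hmxx]; exact le_mx (mn_mem hbne)
  have hss : (ss a : ℤ) = mn b - mn a - 1 := by
    unfold ss; rw [← hb]; rw [Int.toNat_of_nonneg (by omega)]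
  push_cast at h1 h2' ⊢
  omega

lemma rr_le {a : Finset ℤ} (h2 : 2 ≤ a.card) : rr a ≤ gapL a := by
  have := L_mx h2; omega

lemma ss_le {a : Finset ℤ} (h2 : 2 ≤ a.card) : ss a ≤ gapL a := by
  have := L_mn h2; omega

lemma notspec {a : Finset ℤ} {y : ℤ} (h : y ∉ spec a) :
    y ≠ mx a ∧ y ≠ mn a ∧ y ≠ mx (a.erase (mx a)) ∧ y ≠ mn (a.erase (mn a)) := by
  simp only [spec, Finset.mem_insert, Finset.mem_singleton, not_or] at h
  exact ⟨h.1, h.2.1, h.2.2.1, h.2.2.2⟩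

/-- Preservation under a non-special erase. -/
lemma preserve {a : Finset ℤ} {y : ℤ} (hy : y ∈ a) (hns : y ∉ spec a) :
    mx (a.erase y) = mx a ∧ mn (a.erase y) = mn a ∧
    rr (a.erase y) = rr a ∧ ss (a.erase y) = ss a := by
  obtain ⟨h1, h2, h3, h4⟩ := notspec hns
  have hne : a.Nonempty := ⟨y, hy⟩
  have hmxm : mx a ∈ a.erase y := Finset.mem_erase.2 ⟨fun hc => h1 hc.symm, mx_mem hne⟩
  have hmnm : mn a ∈ a.erase y := Finset.mem_erase.2 ⟨fun hc => h2 hc.symm, mn_mem hne⟩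
  have hmx : mx (a.erase y) = mx a := mx_eq_of (Finset.erase_subset _ _) hmxm
  have hmn : mn (a.erase y) = mn a := mn_eq_of (Finset.erase_subset _ _) hmnm
  refine ⟨hmx, hmn, ?_, ?_⟩
  · unfold rr
    rw [hmx, Finset.erase_right_comm]
    have hb : a.erase (mx a) |>.Nonempty := ⟨y, Finset.mem_erase.2 ⟨h1, hy⟩⟩
    have : mx (a.erase (mx a)) ∈ (a.erase (mx a)).erase y :=
      Finset.mem_erase.2 ⟨fun hc => h3 hc.symm, mx_mem hb⟩
    rw [mx_eq_of (Finset.erase_subset _ _) this]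
  · unfold ss
    rw [hmn, Finset.erase_right_comm]
    have hb : a.erase (mn a) |>.Nonempty := ⟨y, Finset.mem_erase.2 ⟨h2, hy⟩⟩
    have : mn (a.erase (mn a)) ∈ (a.erase (mn a)).erase y :=
      Finset.mem_erase.2 ⟨fun hc => h4 hc.symm, mn_mem hb⟩
    rw [mn_eq_of (Finset.erase_subset _ _) this]

end AC

namespace Path

variable {f : ℕ → Finset ℤ} {y : ℕ → ℤ}

/-- Segment with no special erasures: gapL grows by 1 each step; rr, ss preserved. -/
lemma seg (i0 : ℕ) {f : ℕ → Finset ℤ} {y : ℕ → ℤ} : ∀ j, i0 ≤ j →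
    (∀ i, i0 ≤ i → i < j → y i ∈ f i ∧ f (i+1) = (f i).erase (y i)) →
    (∀ i, i0 ≤ i → i < j → y i ∉ AC.spec (f i)) →
    gapL (f j) = gapL (f i0) + (j - i0) ∧ AC.rr (f j) = AC.rr (f i0) ∧
      AC.ss (f j) = AC.ss (f i0) := by
  intro j hj
  induction j, hj using Nat.le_induction with
  | base => intro _ _; simp
  | succ j hj ih =>
    intro hstep hns
    obtain ⟨hE, hR, hS⟩ := ih (fun i h1 h2 => hstep i h1 (by omega))
      (fun i h1 h2 => hns i h1 (by omega))
    obtain ⟨hy, hf⟩ := hstep j hj (by omega)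
    have hns' := hns j hj (by omega)
    obtain ⟨h1, h2, h3, h4⟩ := AC.notspec hns'
    have hpres := AC.preserve hy hns'
    refine ⟨?_, ?_, ?_⟩
    · rw [hf, AC.L_int hy h1 h2]; omega
    · rw [hf, hpres.2.2.1]; exact hR
    · rw [hf, hpres.2.2.2]; exact hS

/-- At most one special erasure: bound on the gap count after `j` erasures. -/
lemma q1 {f : ℕ → Finset ℤ} {y : ℕ → ℤ} (j : ℕ)
    (hstep : ∀ i, i < j → y i ∈ f i ∧ f (i+1) = (f i).erase (y i))
    (hcard : ∀ i, i < j → 2 ≤ (f i).card)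
    (huniq : ∀ i1 i2, i1 < j → i2 < j → y i1 ∈ AC.spec (f i1) →
      y i2 ∈ AC.spec (f i2) → i1 = i2) :
    gapL (f 0) + j ≤ gapL (f j) + 1 + max (AC.rr (f 0)) (AC.ss (f 0)) := by
  by_cases hex : ∃ i, i < j ∧ y i ∈ AC.spec (f i)
  · obtain ⟨i0, hi0, hsp⟩ := hex
    have hseg1 := seg 0 i0 (by omega)
      (fun i h1 h2 => hstep i (by omega))
      (fun i h1 h2 hbad => by
        have := huniq i i0 (by omega) hi0 hbad hsp; omega)
    have hseg2 := seg (i0+1) j (by omega)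
      (fun i h1 h2 => hstep i (by omega))
      (fun i h1 h2 hbad => by
        have := huniq i i0 (by omega) hi0 hbad hsp; omega)
    obtain ⟨hy, hf⟩ := hstep i0 hi0
    have hc2 := hcard i0 hi0
    -- one-step analysis at i0
    have hkey : gapL (f i0) ≤ gapL (f (i0+1)) + max (AC.rr (f 0)) (AC.ss (f 0)) := by
      by_cases hx : y i0 = AC.mx (f i0)
      · have := AC.L_mx hc2
        rw [← hx, ← hf] at this
        have hrle : AC.rr (f i0) ≤ max (AC.rr (f 0)) (AC.ss (f 0)) := by
          rw [hseg1.2.1]; exact le_max_left _ _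
        omega
      · by_cases hn : y i0 = AC.mn (f i0)
        · have := AC.L_mn hc2
          rw [← hn, ← hf] at this
          have hsle : AC.ss (f i0) ≤ max (AC.rr (f 0)) (AC.ss (f 0)) := by
            rw [hseg1.2.2]; exact le_max_right _ _
          omega
        · have : gapL (f (i0+1)) = gapL (f i0) + 1 := by
            rw [hf]; exact AC.L_int hy hx hn
          omega
    have e1 := hseg1.1
    have e2 := hseg2.1
    omega
  · push_neg at hex
    have hseg := seg 0 j (by omega) (fun i _ h2 => hstep i h2)
      (fun i _ h2 => hex i h2)
    omega

/-- The deterministic lemma: `K-1` erasures, at most one special, from a set of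
size at least `3`. -/
lemma main {K : ℕ} (hK : 2 ≤ K) {f : ℕ → Finset ℤ} {y : ℕ → ℤ}
    (hstep : ∀ i, i < K - 1 → y i ∈ f i ∧ f (i+1) = (f i).erase (y i))
    (hcard0 : K + 1 ≤ (f 0).card)
    (huniq : ∀ i1 i2, i1 < K - 1 → i2 < K - 1 → y i1 ∈ AC.spec (f i1) →
      y i2 ∈ AC.spec (f i2) → i1 = i2) :
    K - 2 ≤ gapL (f (K - 1)) := by
  have hcards : ∀ i, i ≤ K - 1 → (f i).card = (f 0).card - i := by
    intro i hi
    induction i with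
    | zero => simp
    | succ i ih =>
      obtain ⟨hy, hf⟩ := hstep i (by omega)
      rw [hf, Finset.card_erase_of_mem hy, ih (by omega)]; omega
  have hcard : ∀ i, i < K - 1 → 2 ≤ (f i).card := by
    intro i hi; rw [hcards i (by omega)]; omega
  have h := q1 (K-1) hstep hcard huniq
  have h2 : 2 ≤ (f 0).card := by omega
  have hr := AC.rr_le h2
  have hs := AC.ss_le h2
  omega

end Path

namespace AC

/-- Deterministic cardinality of the configuration at step `t`. -/
def cK (K t : ℕ) : ℕ :=
  t / (2*K-1) + 1 + (if t % (2*K-1) ≤ K then t % (2*K-1) else 2*K - t % (2*K-1))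

lemma divmod_eval {K : ℕ} (hK : 2 ≤ K) (n r : ℕ) (hr : r < 2*K-1) :
    (n*(2*K-1) + r) / (2*K-1) = n ∧ (n*(2*K-1) + r) % (2*K-1) = r := by
  have hD : 0 < 2*K-1 := by omega
  have h1 : n*(2*K-1) + r = (2*K-1)*n + r := by ring
  rw [h1, Nat.mul_add_div hD, Nat.mul_add_mod, Nat.div_eq_of_lt hr, Nat.mod_eq_of_lt hr]
  omega

lemma cK_eval {K : ℕ} (hK : 2 ≤ K) (n r : ℕ) (hr : r < 2*K-1) :
    cK K (n*(2*K-1) + r) = n + 1 + (if r ≤ K then r else 2*K - r) := by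
  obtain ⟨h1, h2⟩ := divmod_eval hK n r hr
  unfold cK; rw [h1, h2]

lemma cK_step {K : ℕ} (hK : 2 ≤ K) (t : ℕ) :
    (t % (2*K-1) < K → cK K (t+1) = cK K t + 1) ∧
    (K ≤ t % (2*K-1) → cK K t = cK K (t+1) + 1) := by
  have hD : 0 < 2*K-1 := by omega
  set q := t / (2*K-1) with hq
  set r := t % (2*K-1) with hr
  have hrD : r < 2*K-1 := Nat.mod_lt _ hD
  have ht : t = q*(2*K-1) + r := by
    rw [hq, hr, Nat.mul_comm]; exact (Nat.div_add_mod t (2*K-1)).symm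
  by_cases hcase : r + 1 < 2*K-1
  · have e : t + 1 = q*(2*K-1) + (r+1) := by omega
    have h1 := cK_eval hK q (r+1) hcase
    have h0 := cK_eval hK q r hrD
    rw [← e] at h1; rw [← ht] at h0
    rw [h0, h1]
    constructor <;> intro h <;> split_ifs <;> omega
  · have hre : r = 2*K-2 := by omega
    have e : t + 1 = (q+1)*(2*K-1) + 0 := by
      rw [ht, hre]; ring_nf; omega
    have h1 := cK_eval hK (q+1) 0 hD
    have h0 := cK_eval hK q r hrD
    rw [← e] at h1; rw [← ht] at h0
    rw [h0, h1]
    constructor <;> intro h <;> split_ifs <;> omega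

/-- value of `cK` at deletion steps. -/
lemma cK_del {K : ℕ} (hK : 2 ≤ K) (n u : ℕ) (hu : u ≤ K - 2) :
    cK K (n*(2*K-1) + (K + u)) = n + 1 + K - u := by
  have h := cK_eval hK n (K+u) (by omega)
  rw [h]; split_ifs <;> omega

end AC

namespace ACP

section Prob

variable {Ω : Type*} [MeasurableSpace Ω] (P : Measure Ω) (X : ℕ → Ω → Finset ℤ)

def Cyl (T : ℕ) (f : ℕ → Finset ℤ) : Set Ω := ⋂ s ∈ Finset.range (T+1), {ω | X s ω = f s}

lemma mem_Cyl {T : ℕ} {f : ℕ → Finset ℤ} {ω : Ω} :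
    ω ∈ Cyl X T f ↔ ∀ s ≤ T, X s ω = f s := by
  simp [Cyl, Nat.lt_succ_iff]

noncomputable def cylP (K : ℕ) (f : ℕ → Finset ℤ) (T : ℕ) : ℝ≥0∞ :=
  if f 0 = ({0} : Finset ℤ) then
    ∏ s ∈ Finset.range T, stepProb K s (f s) (f (s+1)) else 0

lemma cylP_succ {K : ℕ} {f : ℕ → Finset ℤ} {T : ℕ} :
    cylP K f (T+1) = cylP K f T * stepProb K T (f T) (f (T+1)) := by
  unfold cylP; split_ifs with h
  · rw [Finset.prod_range_succ]
  · rw [zero_mul]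

lemma cylP_congr {K : ℕ} {f g : ℕ → Finset ℤ} {T : ℕ} (h : ∀ s ≤ T, f s = g s) :
    cylP K f T = cylP K g T := by
  unfold cylP
  rw [h 0 (Nat.zero_le _)]
  split_ifs with h0
  · apply Finset.prod_congr rfl
    intro s hs
    rw [Finset.mem_range] at hs
    rw [h s (by omega), h (s+1) (by omega)]
  · rfl

lemma meas_Cyl (hmeas : ∀ t b, MeasurableSet {ω | X t ω = b}) (T : ℕ) (f : ℕ → Finset ℤ) :
    MeasurableSet (Cyl X T f) :=
  MeasurableSet.biInter (Set.to_countable _) (fun s _ => hmeas s (f s))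

lemma P_Cyl {K : ℕ}
    (h0 : ∀ ω, X 0 ω = ({0} : Finset ℤ))
    (hstep : ∀ (f : ℕ → Finset ℤ) (t : ℕ),
      P (⋂ s ∈ Finset.range (t + 2), {ω | X s ω = f s}) =
        P (⋂ s ∈ Finset.range (t + 1), {ω | X s ω = f s}) *
          stepProb K t (f t) (f (t + 1)))
    [IsProbabilityMeasure P] :
    ∀ T f, P (Cyl X T f) = cylP K f T := by
  intro T
  induction T with
  | zero =>
    intro f
    have hc : Cyl X 0 f = {ω | X 0 ω = f 0} := by
      ext ω; simp [mem_Cyl, Nat.le_zero]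
    rw [hc]
    by_cases h : f 0 = ({0} : Finset ℤ)
    · have : {ω | X 0 ω = f 0} = Set.univ := by
        ext ω; simp [h0 ω, h]
      rw [this, measure_univ]
      simp [cylP, h]
    · have : {ω | X 0 ω = f 0} = ∅ := by
        ext ω; simp [h0 ω]; intro hc'; exact h (hc' ▸ rfl)
      rw [this, measure_empty]
      simp [cylP, h]
  | succ T ih =>
    intro f
    have : P (Cyl X (T+1) f) =
        P (⋂ s ∈ Finset.range (T + 2), {ω | X s ω = f s}) := rfl
    rw [this, hstep f T]
    have : (⋂ s ∈ Finset.range (T + 1), {ω | X s ω = f s}) = Cyl X T f := rfl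
    rw [this, ih f, cylP_succ]

def extend (T : ℕ) (v : Fin (T+1) → Finset ℤ) : ℕ → Finset ℤ :=
  fun s => if h : s < T+1 then v ⟨s, h⟩ else ∅

def traj (T : ℕ) (ω : Ω) : Fin (T+1) → Finset ℤ := fun s => X s ω

lemma traj_eq_of_mem {T : ℕ} {v : Fin (T+1) → Finset ℤ} {ω : Ω}
    (h : ω ∈ Cyl X T (extend T v)) : traj X T ω = v := by
  funext s
  have := (mem_Cyl X).1 h s (Nat.lt_succ_iff.1 s.isLt)
  simp only [traj, this, extend, s.isLt, dif_pos]

lemma event_eq {T : ℕ} (Q : (Fin (T+1) → Finset ℤ) → Prop) :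
    {ω | Q (traj X T ω)} = ⋃ v : {v // Q v}, Cyl X T (extend T v.1) := by
  ext ω
  constructor
  · intro hQ
    refine Set.mem_iUnion.2 ⟨⟨traj X T ω, hQ⟩, ?_⟩
    rw [mem_Cyl]
    intro s hs
    simp [extend, Nat.lt_succ_iff.2 hs, traj]
  · intro h
    obtain ⟨v, hv⟩ := Set.mem_iUnion.1 h
    have := traj_eq_of_mem X hv
    simpa [this] using v.2

lemma event_disjoint {T : ℕ} (Q : (Fin (T+1) → Finset ℤ) → Prop) :
    Pairwise (Function.onFun Disjoint
      (fun v : {v // Q v} => Cyl X T (extend T v.1))) := by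
  intro v v' hvv'
  rw [Function.onFun, Set.disjoint_left]
  intro ω h1 h2
  exact hvv' (Subtype.ext ((traj_eq_of_mem X h1).symm.trans (traj_eq_of_mem X h2)))

lemma meas_event (hmeas : ∀ t b, MeasurableSet {ω | X t ω = b}) {T : ℕ}
    (Q : (Fin (T+1) → Finset ℤ) → Prop) :
    MeasurableSet {ω | Q (traj X T ω)} := by
  rw [event_eq]
  exact MeasurableSet.iUnion (fun v => meas_Cyl X hmeas T _)

lemma P_event {K : ℕ}
    (hmeas : ∀ t b, MeasurableSet {ω | X t ω = b})
    (h0 : ∀ ω, X 0 ω = ({0} : Finset ℤ))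
    (hstep : ∀ (f : ℕ → Finset ℤ) (t : ℕ),
      P (⋂ s ∈ Finset.range (t + 2), {ω | X s ω = f s}) =
        P (⋂ s ∈ Finset.range (t + 1), {ω | X s ω = f s}) *
          stepProb K t (f t) (f (t + 1)))
    [IsProbabilityMeasure P] {T : ℕ} (Q : (Fin (T+1) → Finset ℤ) → Prop) :
    P {ω | Q (traj X T ω)} = ∑' v : {v // Q v}, cylP K (extend T v.1) T := by
  rw [event_eq, measure_iUnion (event_disjoint X Q) (fun v => meas_Cyl X hmeas T _)]
  exact tsum_congr (fun v => P_Cyl P X h0 hstep T _)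

end Prob

end ACP

namespace ACP

section Prob2

variable {Ω : Type*} [MeasurableSpace Ω] (P : Measure Ω) (X : ℕ → Ω → Finset ℤ)

lemma stepProb_ne_zero_add {K t : ℕ} {a b : Finset ℤ} (ht : t % (2*K-1) < K)
    (h : stepProb K t a b ≠ 0) : ∃ y ∈ bdryZ a, b = insert y a := by
  unfold stepProb at h; rw [if_pos ht] at h
  by_contra hc; rw [if_neg hc] at h; exact h rfl

lemma stepProb_ne_zero_del {K t : ℕ} {a b : Finset ℤ} (ht : ¬ t % (2*K-1) < K)
    (h : stepProb K t a b ≠ 0) : ∃ y ∈ a, b = a.erase y := by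
  unfold stepProb at h; rw [if_neg ht] at h
  by_contra hc; rw [if_neg hc] at h; exact h rfl

lemma stepProb_del_le {K t : ℕ} (ht : ¬ t % (2*K-1) < K) (a b : Finset ℤ) :
    stepProb K t a b ≤ ((a.card : ℝ≥0∞))⁻¹ := by
  unfold stepProb; rw [if_neg ht]
  split_ifs
  · exact le_rfl
  · exact zero_le

lemma cylP_card {K : ℕ} (hK : 2 ≤ K) :
    ∀ (T : ℕ) (f : ℕ → Finset ℤ), cylP K f T ≠ 0 → ∀ s ≤ T, (f s).card = AC.cK K s := by
  intro T
  induction T with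
  | zero =>
    intro f h s hs
    interval_cases s
    have h0 : f 0 = ({0} : Finset ℤ) := by
      by_contra hc; unfold cylP at h; rw [if_neg hc] at h; exact h rfl
    rw [h0]
    simp [AC.cK]
  | succ T ih =>
    intro f h s hs
    rw [cylP_succ] at h
    have h1 : cylP K f T ≠ 0 := fun hc => h (by rw [hc, zero_mul])
    have h2 : stepProb K T (f T) (f (T+1)) ≠ 0 := fun hc => h (by rw [hc, mul_zero])
    rcases Nat.lt_succ_iff_lt_or_eq.1 (Nat.lt_succ_of_le hs) with hs' | hs'
    · exact ih f h1 s (by omega)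
    · subst hs'
      have hT := ih f h1 T le_rfl
      by_cases hadd : T % (2*K-1) < K
      · obtain ⟨y, hy, hb⟩ := stepProb_ne_zero_add hadd h2
        have hyn : y ∉ f T := (Finset.mem_sdiff.1 hy).2
        rw [hb, Finset.card_insert_of_notMem hyn, hT, (AC.cK_step hK T).1 hadd]
      · obtain ⟨y, hy, hb⟩ := stepProb_ne_zero_del hadd h2
        have := (AC.cK_step hK T).2 (by omega)
        rw [hb, Finset.card_erase_of_mem hy, hT]
        omega

/-- the event that the erased site at a (deletion) step `t` is special -/
def SEv (t : ℕ) : Set Ω := {ω | ∃ y ∈ AC.spec (X t ω), X (t+1) ω = (X t ω).erase y}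

lemma SEv_eq (t : ℕ) : SEv X t = {ω | (fun w : Fin (t+2) → Finset ℤ =>
    ∃ y ∈ AC.spec (w ⟨t, by omega⟩), w ⟨t+1, by omega⟩ = (w ⟨t, by omega⟩).erase y)
      (traj X (t+1) ω)} := rfl

lemma meas_SEv (hmeas : ∀ t b, MeasurableSet {ω | X t ω = b}) (t : ℕ) :
    MeasurableSet (SEv X t) := by
  rw [SEv_eq]
  exact meas_event X hmeas (fun w : Fin (t+2) → Finset ℤ =>
    ∃ y ∈ AC.spec (w ⟨t, by omega⟩), w ⟨t+1, by omega⟩ = (w ⟨t, by omega⟩).erase y)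

lemma key_v {K : ℕ}
    (h0 : ∀ ω, X 0 ω = ({0} : Finset ℤ))
    (hstep : ∀ (f : ℕ → Finset ℤ) (t : ℕ),
      P (⋂ s ∈ Finset.range (t + 2), {ω | X s ω = f s}) =
        P (⋂ s ∈ Finset.range (t + 1), {ω | X s ω = f s}) *
          stepProb K t (f t) (f (t + 1)))
    [IsProbabilityMeasure P] {t m : ℕ}
    (hdel : ¬ t % (2*K-1) < K)
    (hcard : ∀ f : ℕ → Finset ℤ, cylP K f t ≠ 0 → m ≤ (f t).card)
    (f : ℕ → Finset ℤ) :
    P (Cyl X t f ∩ SEv X t) ≤ 4 * (m : ℝ≥0∞)⁻¹ * cylP K f t := by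
  set a := f t with ha
  have hsub : Cyl X t f ∩ SEv X t ⊆
      ⋃ y ∈ AC.spec a, Cyl X (t+1) (Function.update f (t+1) (a.erase y)) := by
    rintro ω ⟨h1, h2⟩
    obtain ⟨y, hy, he⟩ := h2
    have hXt : X t ω = a := (mem_Cyl X).1 h1 t le_rfl
    rw [hXt] at hy he
    refine Set.mem_iUnion₂.2 ⟨y, hy, ?_⟩
    rw [mem_Cyl]
    intro s hs
    rcases Nat.lt_succ_iff_lt_or_eq.1 (Nat.lt_succ_of_le hs) with hs' | hs'
    · rw [Function.update_of_ne (by omega)]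
      exact (mem_Cyl X).1 h1 s (by omega)
    · subst hs'
      rw [Function.update_self]
      exact he
  calc P (Cyl X t f ∩ SEv X t)
      ≤ P (⋃ y ∈ AC.spec a, Cyl X (t+1) (Function.update f (t+1) (a.erase y))) :=
        measure_mono hsub
    _ ≤ ∑ y ∈ AC.spec a, P (Cyl X (t+1) (Function.update f (t+1) (a.erase y))) :=
        measure_biUnion_finset_le _ _
    _ ≤ ∑ _y ∈ AC.spec a, (m : ℝ≥0∞)⁻¹ * cylP K f t := by
        apply Finset.sum_le_sum
        intro y hy
        rw [P_Cyl P X h0 hstep, cylP_succ]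
        have hcon : cylP K (Function.update f (t+1) (a.erase y)) t = cylP K f t :=
          cylP_congr (fun s hs => Function.update_of_ne (by omega) _ _)
        rw [hcon]
        have hup1 : Function.update f (t+1) (a.erase y) t = a :=
          Function.update_of_ne (by omega) _ _
        have hup2 : Function.update f (t+1) (a.erase y) (t+1) = a.erase y :=
          Function.update_self _ _ _
        rw [hup1, hup2, mul_comm (cylP K f t)]
        by_cases hz : cylP K f t = 0
        · rw [hz, mul_zero]; exact zero_le
        · apply mul_le_mul_left
          refine le_trans (stepProb_del_le hdel a _) ?_
          apply ENNReal.inv_le_inv'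
          exact_mod_cast hcard f hz
    _ = (AC.spec a).card • ((m : ℝ≥0∞)⁻¹ * cylP K f t) := by
        rw [Finset.sum_const]
    _ ≤ 4 * (m : ℝ≥0∞)⁻¹ * cylP K f t := by
        rw [nsmul_eq_mul, ← mul_assoc]
        apply mul_le_mul_left
        apply mul_le_mul_left
        exact_mod_cast AC.card_spec_le a

lemma step_bound {K : ℕ}
    (hmeas : ∀ t b, MeasurableSet {ω | X t ω = b})
    (h0 : ∀ ω, X 0 ω = ({0} : Finset ℤ))
    (hstep : ∀ (f : ℕ → Finset ℤ) (t : ℕ),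
      P (⋂ s ∈ Finset.range (t + 2), {ω | X s ω = f s}) =
        P (⋂ s ∈ Finset.range (t + 1), {ω | X s ω = f s}) *
          stepProb K t (f t) (f (t + 1)))
    [IsProbabilityMeasure P] {t m : ℕ}
    (hdel : ¬ t % (2*K-1) < K)
    (hcard : ∀ f : ℕ → Finset ℤ, cylP K f t ≠ 0 → m ≤ (f t).card)
    (Q : (Fin (t+1) → Finset ℤ) → Prop) :
    P ({ω | Q (traj X t ω)} ∩ SEv X t) ≤
      4 * (m : ℝ≥0∞)⁻¹ * P {ω | Q (traj X t ω)} := by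
  rw [event_eq X Q, Set.iUnion_inter]
  have hdisj : Pairwise (Function.onFun Disjoint
      (fun v : {v // Q v} => Cyl X t (extend t v.1) ∩ SEv X t)) := by
    intro v v' hvv'
    exact Disjoint.mono Set.inter_subset_left Set.inter_subset_left
      (event_disjoint X Q hvv')
  rw [measure_iUnion hdisj
    (fun v => (meas_Cyl X hmeas t _).inter (meas_SEv X hmeas t))]
  calc ∑' v : {v // Q v}, P (Cyl X t (extend t v.1) ∩ SEv X t)
      ≤ ∑' v : {v // Q v}, 4 * (m : ℝ≥0∞)⁻¹ * cylP K (extend t v.1) t :=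
        ENNReal.tsum_le_tsum (fun v => key_v P X h0 hstep hdel hcard _)
    _ = 4 * (m : ℝ≥0∞)⁻¹ * ∑' v : {v // Q v}, cylP K (extend t v.1) t :=
        ENNReal.tsum_mul_left
    _ = 4 * (m : ℝ≥0∞)⁻¹ * P (⋃ v : {v // Q v}, Cyl X t (extend t v.1)) := by
        rw [measure_iUnion (event_disjoint X Q) (fun v => meas_Cyl X hmeas t _)]
        congr 1
        exact (tsum_congr (fun v => (P_Cyl P X h0 hstep t _).symm))

end Prob2

end ACP

namespace ACP

section Prob3

variable {Ω : Type*} [MeasurableSpace Ω] (P : Measure Ω) (X : ℕ → Ω → Finset ℤ)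

/-- a.s. structural property of paths -/
def Struct (K : ℕ) (ω : Ω) : Prop :=
  ∀ t, ((¬ t % (2*K-1) < K) → ∃ y ∈ X t ω, X (t+1) ω = (X t ω).erase y) ∧
    (X t ω).card = AC.cK K t

lemma null_struct {K : ℕ} (hK : 2 ≤ K)
    (hmeas : ∀ t b, MeasurableSet {ω | X t ω = b})
    (h0 : ∀ ω, X 0 ω = ({0} : Finset ℤ))
    (hstep : ∀ (f : ℕ → Finset ℤ) (t : ℕ),
      P (⋂ s ∈ Finset.range (t + 2), {ω | X s ω = f s}) =
        P (⋂ s ∈ Finset.range (t + 1), {ω | X s ω = f s}) *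
          stepProb K t (f t) (f (t + 1)))
    [IsProbabilityMeasure P] :
    P {ω | ¬ Struct X K ω} = 0 := by
  have hsub : {ω | ¬ Struct X K ω} ⊆ ⋃ t, {ω |
      (fun w : Fin (t+2) → Finset ℤ =>
        ¬ (((¬ t % (2*K-1) < K) → ∃ y ∈ w ⟨t, by omega⟩,
            w ⟨t+1, by omega⟩ = (w ⟨t, by omega⟩).erase y) ∧
          (w ⟨t, by omega⟩).card = AC.cK K t)) (traj X (t+1) ω)} := by
    intro ω hω
    simp only [Struct, not_forall] at hω
    obtain ⟨t, ht⟩ := hω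
    exact Set.mem_iUnion.2 ⟨t, ht⟩
  refine le_antisymm (le_trans (measure_mono hsub) (le_trans (measure_iUnion_le _) ?_)) (zero_le)
  have : ∀ t : ℕ, P {ω |
      (fun w : Fin (t+2) → Finset ℤ =>
        ¬ (((¬ t % (2*K-1) < K) → ∃ y ∈ w ⟨t, by omega⟩,
            w ⟨t+1, by omega⟩ = (w ⟨t, by omega⟩).erase y) ∧
          (w ⟨t, by omega⟩).card = AC.cK K t)) (traj X (t+1) ω)} = 0 := by
    intro t
    rw [P_event P X hmeas h0 hstep (fun w : Fin (t+2) → Finset ℤ =>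
      ¬ (((¬ t % (2*K-1) < K) → ∃ y ∈ w ⟨t, by omega⟩,
          w ⟨t+1, by omega⟩ = (w ⟨t, by omega⟩).erase y) ∧
        (w ⟨t, by omega⟩).card = AC.cK K t))]
    apply ENNReal.tsum_eq_zero.2
    rintro ⟨v, hv⟩
    by_contra hne
    have h1 : cylP K (extend (t+1) v) (t+1) ≠ 0 := hne
    have hcard := cylP_card hK (t+1) _ h1 t (by omega)
    have hext : extend (t+1) v t = v ⟨t, by omega⟩ := by
      simp only [extend]; rw [dif_pos (by omega : t < t+1+1)]
    have hext1 : extend (t+1) v (t+1) = v ⟨t+1, by omega⟩ := by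
      simp only [extend]; rw [dif_pos (by omega : t+1 < t+1+1)]
    apply hv
    constructor
    · intro hdel
      rw [cylP_succ] at h1
      have h2 : stepProb K t (extend (t+1) v t) (extend (t+1) v (t+1)) ≠ 0 :=
        fun hc => h1 (by rw [hc, mul_zero])
      obtain ⟨y, hy, hb⟩ := stepProb_ne_zero_del hdel h2
      rw [hext] at hy
      rw [hext, hext1] at hb
      exact ⟨y, hy, hb⟩
    · rw [← hext, hcard]
  simp only [this, tsum_zero]
  exact le_rfl

end Prob3

end ACP

namespace ACP

section Prob4

variable {Ω : Type*} [MeasurableSpace Ω] (P : Measure Ω) (X : ℕ → Ω → Finset ℤ)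

def dstep (K n i : ℕ) : ℕ := n*(2*K-1) + K + i

def Bad (K n : ℕ) : Set Ω := ⋃ i ∈ Finset.range (K-1), ⋃ j ∈ Finset.range i,
  (SEv X (dstep K n j) ∩ SEv X (dstep K n i))

variable {K : ℕ} (hK : 2 ≤ K)
  (hmeas : ∀ t b, MeasurableSet {ω | X t ω = b})
  (h0 : ∀ ω, X 0 ω = ({0} : Finset ℤ))
  (hstep : ∀ (f : ℕ → Finset ℤ) (t : ℕ),
      P (⋂ s ∈ Finset.range (t + 2), {ω | X s ω = f s}) =
        P (⋂ s ∈ Finset.range (t + 1), {ω | X s ω = f s}) *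
          stepProb K t (f t) (f (t + 1)))
  [IsProbabilityMeasure P]

include hK in
lemma dstep_mod {n i : ℕ} (hi : i ≤ K - 2) :
    (dstep K n i) % (2*K-1) = K + i := by
  have : dstep K n i = n*(2*K-1) + (K+i) := by unfold dstep; omega
  rw [this, (AC.divmod_eval hK n (K+i) (by omega)).2]

include hK in
lemma dstep_card {n i : ℕ} (hi : i ≤ K - 2) :
    AC.cK K (dstep K n i) = n + 1 + K - i := by
  have : dstep K n i = n*(2*K-1) + (K+i) := by unfold dstep; omega
  rw [this, AC.cK_del hK n i hi]

include hK hmeas h0 hstep in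
lemma P_SEv_pair_aux {n i : ℕ} (hi : i ≤ K - 2)
    (Q : (Fin (dstep K n i + 1) → Finset ℤ) → Prop) :
    P ({ω | Q (traj X (dstep K n i) ω)} ∩ SEv X (dstep K n i)) ≤
      (4 * ((n+3 : ℕ) : ℝ≥0∞)⁻¹) * P {ω | Q (traj X (dstep K n i) ω)} := by
  have hdel : ¬ (dstep K n i) % (2*K-1) < K := by rw [dstep_mod hK hi]; omega
  have hcard : ∀ f : ℕ → Finset ℤ, cylP K f (dstep K n i) ≠ 0 →
      (n+3) ≤ (f (dstep K n i)).card := by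
    intro f hf
    rw [cylP_card hK _ f hf _ le_rfl, dstep_card hK hi]
    omega
  exact step_bound P X hmeas h0 hstep hdel hcard Q

include hK hmeas h0 hstep in
lemma P_SEv_single {n i : ℕ} (hi : i ≤ K - 2) :
    P (SEv X (dstep K n i)) ≤ 4 * ((n+3 : ℕ) : ℝ≥0∞)⁻¹ := by
  have h := P_SEv_pair_aux P X hK hmeas h0 hstep hi
    (fun _ : Fin (dstep K n i + 1) → Finset ℤ => True)
  simp only [Set.setOf_true, Set.univ_inter, measure_univ, mul_one] at h
  exact h

include hK hmeas h0 hstep in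
lemma P_SEv_pair {n j i : ℕ} (hj : j < i) (hi : i ≤ K - 2) :
    P (SEv X (dstep K n j) ∩ SEv X (dstep K n i)) ≤
      (4 * ((n+3 : ℕ) : ℝ≥0∞)⁻¹) * (4 * ((n+3 : ℕ) : ℝ≥0∞)⁻¹) := by
  have hlt : dstep K n j + 1 ≤ dstep K n i := by unfold dstep; omega
  have hSe : SEv X (dstep K n j) = {ω | (fun w : Fin (dstep K n i + 1) → Finset ℤ =>
      ∃ y ∈ AC.spec (w ⟨dstep K n j, by omega⟩),
        w ⟨dstep K n j + 1, by omega⟩ = (w ⟨dstep K n j, by omega⟩).erase y)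
      (traj X (dstep K n i) ω)} := rfl
  rw [hSe]
  refine le_trans (P_SEv_pair_aux P X hK hmeas h0 hstep hi
    (fun w : Fin (dstep K n i + 1) → Finset ℤ =>
      ∃ y ∈ AC.spec (w ⟨dstep K n j, by omega⟩),
        w ⟨dstep K n j + 1, by omega⟩ = (w ⟨dstep K n j, by omega⟩).erase y)) ?_
  apply mul_le_mul_right
  rw [← hSe]
  exact P_SEv_single P X hK hmeas h0 hstep (by omega)

include hK hmeas h0 hstep in
lemma P_Bad (n : ℕ) :
    P (Bad X K n) ≤ (K : ℝ≥0∞) * K * ((4 * ((n+3 : ℕ) : ℝ≥0∞)⁻¹) *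
      (4 * ((n+3 : ℕ) : ℝ≥0∞)⁻¹)) := by
  set c := (4 * ((n+3 : ℕ) : ℝ≥0∞)⁻¹) * (4 * ((n+3 : ℕ) : ℝ≥0∞)⁻¹) with hc
  calc P (Bad X K n)
      ≤ ∑ i ∈ Finset.range (K-1), P (⋃ j ∈ Finset.range i,
          (SEv X (dstep K n j) ∩ SEv X (dstep K n i))) :=
        measure_biUnion_finset_le _ _
    _ ≤ ∑ i ∈ Finset.range (K-1), ∑ j ∈ Finset.range i,
          P (SEv X (dstep K n j) ∩ SEv X (dstep K n i)) :=
        Finset.sum_le_sum (fun i _ => measure_biUnion_finset_le _ _)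
    _ ≤ ∑ i ∈ Finset.range (K-1), ∑ _j ∈ Finset.range i, c := by
        apply Finset.sum_le_sum; intro i hi
        apply Finset.sum_le_sum; intro j hj
        rw [Finset.mem_range] at hi hj
        exact P_SEv_pair P X hK hmeas h0 hstep hj (by omega)
    _ ≤ (K : ℝ≥0∞) * K * c := by
        calc ∑ i ∈ Finset.range (K-1), ∑ _j ∈ Finset.range i, c
            = ∑ i ∈ Finset.range (K-1), (i : ℝ≥0∞) * c := by
              apply Finset.sum_congr rfl; intro i _
              rw [Finset.sum_const, Finset.card_range, nsmul_eq_mul]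
          _ ≤ ∑ _i ∈ Finset.range (K-1), (K : ℝ≥0∞) * c := by
              apply Finset.sum_le_sum; intro i hi
              rw [Finset.mem_range] at hi
              exact mul_le_mul_left (by exact_mod_cast Nat.le_of_lt (by omega)) _
          _ = ((K-1 : ℕ) : ℝ≥0∞) * ((K : ℝ≥0∞) * c) := by
              rw [Finset.sum_const, Finset.card_range, nsmul_eq_mul]
          _ ≤ (K : ℝ≥0∞) * K * c := by
              rw [← mul_assoc]
              apply mul_le_mul_left
              apply mul_le_mul_left
              exact_mod_cast Nat.sub_le K 1

end Prob4

end ACP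

namespace ACP

lemma tsum_inv_sq_ne_top : (∑' n : ℕ, (((n+3 : ℕ) : ℝ≥0∞)⁻¹)^2) ≠ ⊤ := by
  set g : ℕ → ℝ≥0 := fun n => (((n+3 : ℕ) : ℝ≥0))⁻¹^2 with hg
  have hterm : ∀ n : ℕ, (((n+3 : ℕ) : ℝ≥0∞)⁻¹)^2 = ((g n : ℝ≥0) : ℝ≥0∞) := by
    intro n
    have h3 : (((n+3 : ℕ) : ℝ≥0)) ≠ 0 := Nat.cast_ne_zero.2 (by omega)
    rw [hg]
    simp only
    rw [ENNReal.coe_pow, ENNReal.coe_inv h3, ENNReal.coe_natCast]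
  simp only [hterm]
  rw [ENNReal.tsum_coe_ne_top_iff_summable, ← NNReal.summable_coe]
  apply ((summable_nat_add_iff 3).2 (Real.summable_nat_pow_inv.2 one_lt_two)).congr
  intro n
  rw [hg]
  simp only [NNReal.coe_pow, NNReal.coe_inv, NNReal.coe_natCast]
  push_cast
  rw [inv_pow]

section Final

variable {Ω : Type*} [MeasurableSpace Ω] (P : Measure Ω) (X : ℕ → Ω → Finset ℤ)

variable {K : ℕ}

lemma pathwise (hK : 2 ≤ K) {ω : Ω} (hst : Struct X K ω) {n : ℕ}
    (hB : ω ∉ Bad X K n) : K - 2 ≤ gapL (X ((n+1)*(2*K-1)) ω) := by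
  set f : ℕ → Finset ℤ := fun i => X (n*(2*K-1) + K + i) ω with hf
  have hdel : ∀ i, i ≤ K - 2 → ¬ (n*(2*K-1) + K + i) % (2*K-1) < K := by
    intro i hi
    have : (n*(2*K-1) + K + i) = dstep K n i := rfl
    rw [this, dstep_mod hK hi]
    omega
  have hex : ∀ i, ∃ y : ℤ, i < K - 1 → y ∈ f i ∧ f (i+1) = (f i).erase (y) := by
    intro i
    by_cases hi : i < K - 1
    · obtain ⟨y, hy, he⟩ := (hst (n*(2*K-1) + K + i)).1 (hdel i (by omega))
      refine ⟨y, fun _ => ⟨hy, ?_⟩⟩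
      have heq : n*(2*K-1) + K + i + 1 = n*(2*K-1) + K + (i+1) := by omega
      show X (n*(2*K-1) + K + (i+1)) ω = (X (n*(2*K-1) + K + i) ω).erase y
      rw [← heq]
      exact he
    · exact ⟨0, fun h => absurd h hi⟩
  choose y hy using hex
  have hstep' : ∀ i, i < K - 1 → y i ∈ f i ∧ f (i+1) = (f i).erase (y i) :=
    fun i hi => hy i hi
  have hcard0 : K + 1 ≤ (f 0).card := by
    have := (hst (n*(2*K-1) + K + 0)).2
    rw [hf]
    have heq : (n*(2*K-1) + K + 0) = dstep K n 0 := rfl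
    rw [this, heq, dstep_card hK (by omega)]
    omega
  have huniq : ∀ i1 i2, i1 < K - 1 → i2 < K - 1 → y i1 ∈ AC.spec (f i1) →
      y i2 ∈ AC.spec (f i2) → i1 = i2 := by
    intro i1 i2 h1 h2 hs1 hs2
    by_contra hne
    have hmem : ∀ i, i < K - 1 → y i ∈ AC.spec (f i) → ω ∈ SEv X (dstep K n i) := by
      intro i hi hsi
      refine ⟨y i, hsi, ?_⟩
      have h1 := (hstep' i hi).2
      have : dstep K n i + 1 = n*(2*K-1) + K + (i+1) := by unfold dstep; omega
      show X (dstep K n i + 1) ω = _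
      rw [this]
      exact h1
    apply hB
    rcases Nat.lt_or_ge i1 i2 with hlt | hge
    · exact Set.mem_biUnion (Finset.mem_range.2 h2) (Set.mem_biUnion
        (Finset.mem_range.2 hlt) ⟨hmem i1 h1 hs1, hmem i2 h2 hs2⟩)
    · have hlt : i2 < i1 := by omega
      exact Set.mem_biUnion (Finset.mem_range.2 h1) (Set.mem_biUnion
        (Finset.mem_range.2 hlt) ⟨hmem i2 h2 hs2, hmem i1 h1 hs1⟩)
  have hmain := Path.main hK hstep' hcard0 huniq
  have hfin : n*(2*K-1) + K + (K-1) = (n+1)*(2*K-1) := by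
    have h1 : (n+1)*(2*K-1) = n*(2*K-1) + (2*K-1) := by ring
    omega
  rw [hf] at hmain
  simp only [hfin] at hmain
  exact hmain

end Final

end ACP


/-- In the annihilation–creation model with parameter `K ≥ 2` started from `{0}`,
almost surely `L(A_n) ≥ K - 2` for all sufficiently large `n`.  Here `X` is the
step-by-step process (with `2K-1` steps per period) and `A n = X (n·(2K-1))`. -/
theorem gapL_ge_eventually (K : ℕ) (hK : 2 ≤ K)
    {Ω : Type*} [MeasurableSpace Ω] (P : Measure Ω) [IsProbabilityMeasure P]
    (X : ℕ → Ω → Finset ℤ)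
    (hmeas : ∀ t b, MeasurableSet {ω | X t ω = b})
    (h0 : ∀ ω, X 0 ω = ({0} : Finset ℤ))
    (hstep : ∀ (f : ℕ → Finset ℤ) (t : ℕ),
      P (⋂ s ∈ Finset.range (t + 2), {ω | X s ω = f s}) =
        P (⋂ s ∈ Finset.range (t + 1), {ω | X s ω = f s}) *
          stepProb K t (f t) (f (t + 1))) :
    P {ω | ∀ᶠ n in atTop, K - 2 ≤ gapL (X (n * (2 * K - 1)) ω)} = 1 := by
  classical
  have hBC : P (limsup (fun n => ACP.Bad X K n) atTop) = 0 := by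
    apply measure_limsup_atTop_eq_zero
    have hb : ∀ n : ℕ, P (ACP.Bad X K n) ≤
        ((K : ℝ≥0∞) * K * 16) * (((n+3 : ℕ) : ℝ≥0∞)⁻¹)^2 := by
      intro n
      refine le_trans (ACP.P_Bad P X hK hmeas h0 hstep n) (le_of_eq ?_)
      ring
    refine ne_top_of_le_ne_top ?_ (ENNReal.tsum_le_tsum hb)
    rw [ENNReal.tsum_mul_left]
    exact ENNReal.mul_ne_top
      (ENNReal.mul_ne_top (ENNReal.mul_ne_top (ENNReal.natCast_ne_top K)
        (ENNReal.natCast_ne_top K)) (by norm_num))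
      ACP.tsum_inv_sq_ne_top
  have hNS : P {ω | ¬ ACP.Struct X K ω} = 0 :=
    ACP.null_struct P X hK hmeas h0 hstep
  have hm1 : ∀ t : ℕ, MeasurableSet {ω | K - 2 ≤ gapL (X t ω)} := by
    intro t
    have heq : {ω | K - 2 ≤ gapL (X t ω)} =
        ⋃ b : {b : Finset ℤ // K - 2 ≤ gapL b}, {ω | X t ω = b.1} := by
      ext ω
      simp only [Set.mem_setOf_eq, Set.mem_iUnion]
      constructor
      · intro h; exact ⟨⟨X t ω, h⟩, rfl⟩
      · rintro ⟨b, hb⟩; rw [hb]; exact b.2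
    rw [heq]
    exact MeasurableSet.iUnion (fun b => hmeas t b.1)
  have hmeasT : MeasurableSet {ω | ∀ᶠ n in atTop, K - 2 ≤ gapL (X (n * (2 * K - 1)) ω)} := by
    have hTeq : {ω | ∀ᶠ n in atTop, K - 2 ≤ gapL (X (n * (2 * K - 1)) ω)} =
        ⋃ N : ℕ, ⋂ n : ℕ, ⋂ (_ : N ≤ n), {ω | K - 2 ≤ gapL (X (n * (2 * K - 1)) ω)} := by
      ext ω
      simp only [Set.mem_setOf_eq, Set.mem_iUnion, Set.mem_iInter, eventually_atTop]
    rw [hTeq]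
    exact MeasurableSet.iUnion (fun N => MeasurableSet.iInter (fun n =>
      MeasurableSet.iInter (fun _ => hm1 _)))
  have key : ∀ ω, ω ∉ limsup (fun n => ACP.Bad X K n) atTop → ACP.Struct X K ω →
      ω ∈ {ω | ∀ᶠ n in atTop, K - 2 ≤ gapL (X (n * (2 * K - 1)) ω)} := by
    intro ω hlim hst
    have hfreq : ∀ᶠ n in atTop, ω ∉ ACP.Bad X K n := by
      have : ¬ ∃ᶠ n in atTop, ω ∈ ACP.Bad X K n :=
        fun hf => hlim (Filter.mem_limsup_iff_frequently_mem.2 hf)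
      exact Filter.not_frequently.1 this
    obtain ⟨N, hN⟩ := Filter.eventually_atTop.1 hfreq
    simp only [Set.mem_setOf_eq, eventually_atTop]
    refine ⟨N + 1, fun n hn => ?_⟩
    have hp := ACP.pathwise X hK hst (hN (n-1) (by omega))
    have hn1 : n - 1 + 1 = n := by omega
    rw [hn1] at hp
    exact hp
  have hsub : {ω | ∀ᶠ n in atTop, K - 2 ≤ gapL (X (n * (2 * K - 1)) ω)}ᶜ ⊆
      limsup (fun n => ACP.Bad X K n) atTop ∪ {ω | ¬ ACP.Struct X K ω} := by
    intro ω hω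
    by_contra hc
    simp only [Set.mem_union, Set.mem_setOf_eq, not_or, not_not] at hc
    exact hω (key ω hc.1 hc.2)
  have hcompl : P {ω | ∀ᶠ n in atTop, K - 2 ≤ gapL (X (n * (2 * K - 1)) ω)}ᶜ = 0 := by
    refine le_antisymm (le_trans (measure_mono hsub) ?_) (zero_le)
    refine le_trans (measure_union_le _ _) ?_
    rw [hBC, hNS, add_zero]
  exact (prob_compl_eq_zero_iff hmeasT).1 hcompl
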